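/- For every x < 0, Ei(x) = γ + log(-x) + ∑_{n≥1} xⁿ/(n·n!), where Ei(x) = ∫_{-∞}^x e^t/t dt is an ordinary convergent improper integral. -/

import Mathlib

open MeasureTheory Set Filter Topology Real

lemma lemA : ∫ t in Set.Ioi (0:ℝ), Real.exp (-t) * Real.log t = -Real.eulerMascheroniConstant := by
  have h1 : HasDerivAt Complex.GammaIntegral
      (∫ t : ℝ in Set.Ioi 0, (t:ℂ) ^ ((1:ℂ) - 1) * (Real.log t * Real.exp (-t))) 1 :=
    Complex.hasDerivAt_GammaIntegral (by norm_num)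
  have h2 : (∫ t : ℝ in Set.Ioi 0, (t:ℂ) ^ ((1:ℂ)-1) * (Real.log t * Real.exp (-t)))
      = ((∫ t in Set.Ioi (0:ℝ), Real.exp (-t) * Real.log t : ℝ) : ℂ) := by
    rw [show ((∫ t in Set.Ioi (0:ℝ), Real.exp (-t) * Real.log t : ℝ) : ℂ)
        = ∫ t in Set.Ioi (0:ℝ), ((Real.exp (-t) * Real.log t : ℝ) : ℂ) from
      (integral_ofReal (𝕜 := ℂ)).symm]
    apply MeasureTheory.setIntegral_congr_fun measurableSet_Ioi
    intro t _
    simp only []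
    rw [show ((1:ℂ)-1) = 0 from sub_self 1, Complex.cpow_zero]
    push_cast
    ring
  rw [h2] at h1
  have h3 : HasDerivAt Complex.Gamma ((∫ t in Set.Ioi (0:ℝ), Real.exp (-t) * Real.log t : ℝ) : ℂ) 1 := by
    apply h1.congr_of_eventuallyEq
    have : {s : ℂ | 0 < s.re} ∈ 𝓝 (1:ℂ) := by
      apply IsOpen.mem_nhds (isOpen_lt continuous_const Complex.continuous_re)
      simp
    filter_upwards [this] with s hs
    exact (Complex.Gamma_eq_integral hs)
  have h4 : HasDerivAt (fun y : ℝ => Complex.Gamma (y:ℂ))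
      ((∫ t in Set.Ioi (0:ℝ), Real.exp (-t) * Real.log t : ℝ) : ℂ) 1 := by
    have := h3.comp_ofReal (z := 1)
    simpa using this
  have h5 : HasDerivAt (fun x : ℝ => ((Real.Gamma x : ℂ)))
      ((-Real.eulerMascheroniConstant : ℝ) : ℂ) 1 :=
    Real.hasDerivAt_Gamma_one.ofReal_comp
  have h6 : (fun y : ℝ => Complex.Gamma (y:ℂ)) = fun x : ℝ => ((Real.Gamma x : ℂ)) := by
    ext x; exact Complex.Gamma_ofReal x
  rw [h6] at h4
  have := h4.unique h5
  exact_mod_cast this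

noncomputable def S (x : ℝ) : ℝ := ∑' n : ℕ, x ^ (n + 1) / ((n + 1) * Nat.factorial (n + 1))

lemma exp_tsum (x : ℝ) : Real.exp x = ∑' n : ℕ, x ^ n / Nat.factorial n := by
  rw [Real.exp_eq_exp_ℝ, NormedSpace.exp_eq_tsum_div]

lemma summable_aux (x : ℝ) : Summable (fun n : ℕ => x ^ n / Nat.factorial (n + 1)) := by
  apply Summable.of_norm
  refine Summable.of_nonneg_of_le (fun n => norm_nonneg _) (fun n => ?_)
    (Real.summable_pow_div_factorial |x|)
  have h1 : (0:ℝ) < Nat.factorial (n+1) := by positivity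
  rw [Real.norm_eq_abs, abs_div, abs_pow, abs_of_pos h1]
  gcongr
  exact Nat.le_succ n

lemma hasDerivAt_S (y : ℝ) :
    HasDerivAt S (∑' n : ℕ, y ^ n / Nat.factorial (n + 1)) y := by
  set R : ℝ := |y| + 1 with hR
  have hRpos : 0 < R := by positivity
  show HasDerivAt (fun z : ℝ => ∑' n : ℕ, z ^ (n + 1) / ((n + 1) * Nat.factorial (n + 1)))
    (∑' n : ℕ, y ^ n / Nat.factorial (n + 1)) y
  apply hasDerivAt_tsum_of_isPreconnected
    (u := fun n : ℕ => R ^ n / Nat.factorial (n + 1))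
    (g' := fun (n : ℕ) (z : ℝ) => z ^ n / Nat.factorial (n + 1))
    (t := Metric.ball (0:ℝ) R) (y₀ := 0)
  · exact summable_aux R
  · exact Metric.isOpen_ball
  · exact (convex_ball 0 R).isPreconnected
  · intro n z _
    have h1 : ((n:ℝ) + 1) ≠ 0 := by positivity
    have h := (hasDerivAt_pow (n + 1) z).div_const (((n:ℝ) + 1) * Nat.factorial (n + 1))
    simp only [Nat.add_sub_cancel, Nat.cast_add, Nat.cast_one] at h
    rw [mul_div_mul_left _ _ h1] at h
    exact h
  · intro n z hz
    have hzR : |z| ≤ R := by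
      have := mem_ball_zero_iff.mp hz
      simpa [Real.norm_eq_abs] using this.le
    have h1 : (0:ℝ) < Nat.factorial (n+1) := by positivity
    rw [Real.norm_eq_abs, abs_div, abs_pow, abs_of_pos h1]
    gcongr
  · simp [hRpos]
  · have : (fun n : ℕ => (0:ℝ) ^ (n + 1) / ((n + 1) * Nat.factorial (n + 1)))
        = fun _ : ℕ => (0:ℝ) := by
      ext n; simp
    rw [this]
    exact summable_zero
  · simp only [Metric.mem_ball, dist_zero_right, Real.norm_eq_abs]
    linarith


lemma tsum_deriv {y : ℝ} (hy : y ≠ 0) :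
    (∑' n : ℕ, y ^ n / Nat.factorial (n + 1)) = (Real.exp y - 1) / y := by
  have hsum := Real.summable_pow_div_factorial y
  have h1 : Real.exp y = 1 + ∑' n : ℕ, y ^ (n+1) / Nat.factorial (n+1) := by
    rw [exp_tsum, Summable.tsum_eq_zero_add hsum]
    simp
  have h2 : (∑' n : ℕ, y ^ (n+1) / Nat.factorial (n+1))
      = y * ∑' n : ℕ, y ^ n / Nat.factorial (n+1) := by
    rw [← tsum_mul_left]
    congr 1
    ext n
    rw [pow_succ]
    ring
  rw [h1, h2]
  field_simp
  ring

lemma hasDerivAt_S' {y : ℝ} (hy : y ≠ 0) : HasDerivAt S ((Real.exp y - 1) / y) y := by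
  rw [← tsum_deriv hy]; exact hasDerivAt_S y

lemma S_zero : S 0 = 0 := by
  unfold S
  have : (fun n : ℕ => (0:ℝ) ^ (n + 1) / ((n + 1) * Nat.factorial (n + 1)))
      = fun _ : ℕ => (0:ℝ) := by ext n; simp
  rw [this, tsum_zero]

lemma ratio_bound {t : ℝ} (ht : t ≤ 0) : ‖(Real.exp t - 1) / t‖ ≤ 1 := by
  rcases eq_or_lt_of_le ht with rfl | ht'
  · simp
  · rw [Real.norm_eq_abs, abs_div]
    rw [div_le_one (abs_pos.mpr (ne_of_lt ht'))]
    rw [abs_of_neg ht', abs_of_nonpos (by simp [Real.exp_le_one_iff.mpr ht] : Real.exp t - 1 ≤ 0)]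
    have := Real.add_one_le_exp t
    linarith

lemma intOn_ratio {y z : ℝ} (hy : y ≤ 0) (hz : z ≤ 0) :
    IntervalIntegrable (fun t => (Real.exp t - 1) / t) volume y z := by
  have hm : Measurable (fun t : ℝ => (Real.exp t - 1) / t) :=
    (Real.measurable_exp.sub measurable_const).div measurable_id
  constructor <;>
  · apply Measure.integrableOn_of_bounded (M := 1)
    · exact (measure_Ioc_lt_top).ne
    · exact hm.aestronglyMeasurable
    · apply (ae_restrict_mem measurableSet_Ioc).mono
      intro t htmem
      exact ratio_bound (le_trans htmem.2 (by first | exact hz | exact hy))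

lemma S_eq {y : ℝ} (hy : y < 0) :
    S y = -∫ t in y..0, (Real.exp t - 1) / t := by
  have h := intervalIntegral.integral_eq_sub_of_hasDeriv_right_of_le hy.le
    (f := S) (f' := fun t => (Real.exp t - 1) / t)
    (fun t _ => ((hasDerivAt_S t).continuousAt).continuousWithinAt)
    (fun t htmem => (hasDerivAt_S' (ne_of_lt htmem.2)).hasDerivWithinAt)
    (intOn_ratio hy.le le_rfl)
  rw [S_zero] at h
  linarith [h]

lemma exp_div_integrableOn_Iic {x : ℝ} (hx : x < 0) :
    IntegrableOn (fun t => Real.exp t / t) (Iic x) := by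
  have hm : Measurable (fun t : ℝ => Real.exp t / t) :=
    Real.measurable_exp.div measurable_id
  apply Integrable.mono ((integrableOn_exp_Iic x).div_const (-x))
  · exact hm.aestronglyMeasurable
  · apply (ae_restrict_mem measurableSet_Iic).mono
    intro t htmem
    have ht : t ≤ x := htmem
    have htneg : t < 0 := lt_of_le_of_lt ht hx
    rw [Real.norm_eq_abs, abs_div, abs_of_neg htneg, abs_of_pos (Real.exp_pos t),
      Real.norm_eq_abs, abs_div, abs_of_pos (Real.exp_pos t), abs_of_pos (by linarith : (0:ℝ) < -x)]
    apply div_le_div_of_nonneg_left (Real.exp_pos t).le (by linarith) (by linarith)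



lemma intlog : IntegrableOn Real.log (Ioc 0 1) := by
  have hint : IntegrableOn (fun u : ℝ => 2 * u ^ (-(1/2) : ℝ)) (Ioc 0 1) := by
    have := (intervalIntegral.intervalIntegrable_rpow' (a := 0) (b := 1) (r := -(1/2)) (by norm_num)).const_mul 2
    exact (intervalIntegrable_iff_integrableOn_Ioc_of_le zero_le_one).mp this
  apply Integrable.mono hint Real.measurable_log.aestronglyMeasurable
  apply (ae_restrict_mem measurableSet_Ioc).mono
  intro u hu
  have hu0 : 0 < u := hu.1
  have hu1 : u ≤ 1 := hu.2
  have hlog : Real.log u ≤ 0 := Real.log_nonpos hu0.le hu1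
  have hsq : 0 < Real.sqrt u := Real.sqrt_pos.mpr hu0
  have key : -Real.log u ≤ 2 * u ^ (-(1/2) : ℝ) := by
    have h1 : Real.log (1 / Real.sqrt u) ≤ 1 / Real.sqrt u - 1 :=
      Real.log_le_sub_one_of_pos (by positivity)
    have h2 : Real.log (1 / Real.sqrt u) = -(Real.log u / 2) := by
      rw [one_div, Real.log_inv, Real.log_sqrt hu0.le]
    have h3 : u ^ (-(1/2) : ℝ) = 1 / Real.sqrt u := by
      rw [Real.rpow_neg hu0.le, Real.sqrt_eq_rpow, one_div]
      norm_num
    rw [h3]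
    rw [h2] at h1
    linarith
  rw [Real.norm_eq_abs, abs_of_nonpos hlog, Real.norm_eq_abs]
  calc -Real.log u ≤ 2 * u ^ (-(1/2) : ℝ) := key
    _ ≤ |2 * u ^ (-(1/2) : ℝ)| := le_abs_self _

lemma int1 : IntegrableOn (fun u : ℝ => Real.exp (-u) * Real.log u) (Ioc 0 1) := by
  apply Integrable.mono intlog
  · exact ((Real.measurable_exp.comp measurable_neg).mul Real.measurable_log).aestronglyMeasurable
  · apply (ae_restrict_mem measurableSet_Ioc).mono
    intro u hu
    rw [Real.norm_eq_abs, Real.norm_eq_abs, abs_mul, abs_of_pos (Real.exp_pos _)]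
    calc Real.exp (-u) * |Real.log u| ≤ 1 * |Real.log u| := by
          apply mul_le_mul_of_nonneg_right _ (abs_nonneg _)
          exact Real.exp_le_one_iff.mpr (by linarith [hu.1])
      _ = |Real.log u| := one_mul _

lemma int2 : IntegrableOn (fun u : ℝ => Real.exp (-u) * Real.log u) (Ioi 1) := by
  have hg : IntegrableOn (fun x : ℝ => Real.exp (-x) * x ^ ((2:ℝ) - 1)) (Ioi 1) :=
    (Real.GammaIntegral_convergent (by norm_num : (0:ℝ) < 2)).mono_set
      (Ioi_subset_Ioi zero_le_one)
  apply Integrable.mono hg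
  · exact ((Real.measurable_exp.comp measurable_neg).mul Real.measurable_log).aestronglyMeasurable
  · apply (ae_restrict_mem measurableSet_Ioi).mono
    intro u hu
    have hu1 : 1 < u := hu
    have hu0 : 0 < u := lt_trans zero_lt_one hu1
    have hlog : 0 ≤ Real.log u := Real.log_nonneg hu1.le
    rw [Real.norm_eq_abs, Real.norm_eq_abs, abs_mul, abs_mul, abs_of_pos (Real.exp_pos _),
      abs_of_nonneg hlog]
    have : ((2:ℝ) - 1) = 1 := by norm_num
    rw [this, Real.rpow_one, abs_of_pos hu0]
    apply mul_le_mul_of_nonneg_left _ (Real.exp_pos _).le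
    calc Real.log u ≤ u - 1 := Real.log_le_sub_one_of_pos hu0
      _ ≤ u := by linarith

lemma int3 : IntegrableOn (fun u : ℝ => Real.exp (-u) / u) (Ioi 1) := by
  have hg : IntegrableOn (fun x : ℝ => Real.exp (-1 * x)) (Ioi 1) :=
    exp_neg_integrableOn_Ioi 1 zero_lt_one
  apply Integrable.mono hg
  · exact ((Real.measurable_exp.comp measurable_neg).div measurable_id).aestronglyMeasurable
  · apply (ae_restrict_mem measurableSet_Ioi).mono
    intro u hu
    have hu1 : (1:ℝ) < u := hu
    have hu0 : 0 < u := lt_trans zero_lt_one hu1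
    rw [Real.norm_eq_abs, Real.norm_eq_abs, abs_div, abs_of_pos (Real.exp_pos _), abs_of_pos hu0,
      neg_one_mul, abs_of_pos (Real.exp_pos _)]
    rw [div_le_iff₀ hu0]
    nlinarith [Real.exp_pos (-u)]

lemma step_e : ∫ u in Ioi (1:ℝ), Real.exp (-u) * Real.log u = ∫ u in Ioi (1:ℝ), Real.exp (-u) / u := by
  have hderiv : ∀ u ∈ Ici (1:ℝ), HasDerivAt (fun u : ℝ => -(Real.exp (-u) * Real.log u))
      (Real.exp (-u) * Real.log u - Real.exp (-u) / u) u := by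
    intro u hu
    have hu0 : (0:ℝ) < u := lt_of_lt_of_le zero_lt_one hu
    have h1 : HasDerivAt (fun u : ℝ => Real.exp (-u)) (Real.exp (-u) * (-1)) u :=
      (hasDerivAt_id u).neg.exp
    have h2 : HasDerivAt Real.log u⁻¹ u := Real.hasDerivAt_log (ne_of_gt hu0)
    have h3 := (h1.mul h2).neg
    refine h3.congr_deriv ?_
    ring
  have hfint : IntegrableOn (fun u : ℝ => Real.exp (-u) * Real.log u - Real.exp (-u) / u) (Ioi 1) :=
    int2.sub int3
  have htend : Tendsto (fun u : ℝ => -(Real.exp (-u) * Real.log u)) atTop (𝓝 0) := by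
    apply squeeze_zero_norm' _ (tendsto_pow_mul_exp_neg_atTop_nhds_zero 1)
    filter_upwards [eventually_ge_atTop (1:ℝ)] with u hu
    have hu0 : (0:ℝ) < u := lt_of_lt_of_le zero_lt_one hu
    rw [norm_neg, Real.norm_eq_abs, abs_mul, abs_of_pos (Real.exp_pos _),
      abs_of_nonneg (Real.log_nonneg hu)]
    rw [pow_one]
    rw [mul_comm u (Real.exp (-u))]
    apply mul_le_mul_of_nonneg_left _ (Real.exp_pos _).le
    calc Real.log u ≤ u - 1 := Real.log_le_sub_one_of_pos hu0
      _ ≤ u := by linarith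
  have h := integral_Ioi_of_hasDerivAt_of_tendsto' hderiv hfint htend
  rw [MeasureTheory.integral_sub int2 int3] at h
  simp at h
  linarith

lemma ratio_bound2 {u : ℝ} (hu : 0 ≤ u) : ‖(1 - Real.exp (-u)) / u‖ ≤ 1 := by
  rcases eq_or_lt_of_le hu with rfl | hu'
  · simp
  · rw [Real.norm_eq_abs, abs_div, div_le_one (abs_pos.mpr (ne_of_gt hu'))]
    rw [abs_of_pos hu', abs_of_nonneg (by simp [Real.exp_le_one_iff.mpr (by linarith : -u ≤ 0)] : (0:ℝ) ≤ 1 - Real.exp (-u))]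
    have := Real.add_one_le_exp (-u)
    linarith

lemma int4 : IntervalIntegrable (fun u : ℝ => (1 - Real.exp (-u)) / u) volume 0 1 := by
  rw [intervalIntegrable_iff_integrableOn_Ioc_of_le zero_le_one]
  apply Measure.integrableOn_of_bounded (M := 1)
  · exact (measure_Ioc_lt_top).ne
  · exact ((measurable_const.sub (Real.measurable_exp.comp measurable_neg)).div
      measurable_id).aestronglyMeasurable
  · apply (ae_restrict_mem measurableSet_Ioc).mono
    intro u hu
    exact ratio_bound2 hu.1.le

lemma step_f : ∫ u in Ioc (0:ℝ) 1, Real.exp (-u) * Real.log u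
    = -∫ u in (0:ℝ)..1, (1 - Real.exp (-u)) / u := by
  set g : ℝ → ℝ := fun u => (1 - Real.exp (-u)) * Real.log u with hg
  have hcont : ContinuousOn g (Icc 0 1) := by
    intro u hu
    rcases eq_or_lt_of_le hu.1 with rfl | hu0
    · -- continuity at 0
      have hg0 : g 0 = 0 := by simp [hg]
      rw [ContinuousWithinAt, hg0]
      apply squeeze_zero_norm' _
        (by
          have h0 : Tendsto (fun x : ℝ => ‖x * Real.log x‖) (𝓝 0) (𝓝 ‖(0:ℝ) * Real.log 0‖) :=
            (Real.continuous_mul_log.tendsto 0).norm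
          simp only [zero_mul, norm_zero] at h0
          exact h0.mono_left nhdsWithin_le_nhds)
      filter_upwards [self_mem_nhdsWithin] with u hu
      have hu0 : (0:ℝ) ≤ u := hu.1
      have hb : |1 - Real.exp (-u)| ≤ |u| := by
        rw [abs_of_nonneg (by simp [Real.exp_le_one_iff.mpr (by linarith : -u ≤ 0)] :
          (0:ℝ) ≤ 1 - Real.exp (-u)), abs_of_nonneg hu0]
        have := Real.add_one_le_exp (-u)
        linarith
      rw [Real.norm_eq_abs, Real.norm_eq_abs, hg, abs_mul, abs_mul]
      exact mul_le_mul_of_nonneg_right hb (abs_nonneg _)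
    · exact ((continuous_const.sub ((Real.continuous_exp).comp continuous_neg)).continuousAt.mul
        (Real.continuousAt_log (ne_of_gt hu0))).continuousWithinAt
  have hderiv : ∀ u ∈ Ioo (0:ℝ) 1, HasDerivWithinAt g
      (Real.exp (-u) * Real.log u + (1 - Real.exp (-u)) / u) (Ioi u) u := by
    intro u hu
    have h1 : HasDerivAt (fun u : ℝ => 1 - Real.exp (-u)) (Real.exp (-u)) u := by
      have := ((hasDerivAt_id u).neg.exp).const_sub 1
      refine this.congr_deriv ?_
      simp
    have h2 : HasDerivAt Real.log u⁻¹ u := Real.hasDerivAt_log (ne_of_gt hu.1)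
    have h3 := h1.mul h2
    have : Real.exp (-u) * Real.log u + (1 - Real.exp (-u)) / u
        = Real.exp (-u) * Real.log u + (1 - Real.exp (-u)) * u⁻¹ := by
      rw [div_eq_mul_inv]
    rw [this]
    exact h3.hasDerivWithinAt
  have hint : IntervalIntegrable
      (fun u : ℝ => Real.exp (-u) * Real.log u + (1 - Real.exp (-u)) / u) volume 0 1 := by
    apply IntervalIntegrable.add _ int4
    rw [intervalIntegrable_iff_integrableOn_Ioc_of_le zero_le_one]
    exact int1
  have h := intervalIntegral.integral_eq_sub_of_hasDeriv_right_of_le zero_le_one hcont hderiv hint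
  have hg1 : g 1 = 0 := by simp [hg]
  have hg0 : g 0 = 0 := by simp [hg]
  rw [hg1, hg0, sub_zero] at h
  have hsplit : ∫ u in (0:ℝ)..1, (Real.exp (-u) * Real.log u + (1 - Real.exp (-u)) / u)
      = (∫ u in (0:ℝ)..1, Real.exp (-u) * Real.log u) + ∫ u in (0:ℝ)..1, (1 - Real.exp (-u)) / u := by
    apply intervalIntegral.integral_add _ int4
    rw [intervalIntegrable_iff_integrableOn_Ioc_of_le zero_le_one]
    exact int1
  rw [hsplit] at h
  rw [← intervalIntegral.integral_of_le zero_le_one]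
  linarith

lemma key : (∫ t in Iic (-1:ℝ), Real.exp t / t) + (∫ t in (-1:ℝ)..0, (Real.exp t - 1) / t)
    = Real.eulerMascheroniConstant := by
  have hA : ∫ t in Iic (-1:ℝ), Real.exp t / t = -∫ u in Ioi (1:ℝ), Real.exp (-u) / u := by
    rw [show Iic (-1:ℝ) = Iic (-(1:ℝ)) from rfl, ← integral_comp_neg_Ioi]
    rw [← MeasureTheory.integral_neg]
    apply MeasureTheory.setIntegral_congr_fun measurableSet_Ioi
    intro u _
    show Real.exp (-u) / -u = -(Real.exp (-u) / u)
    rw [div_neg]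
  have hC : ∫ t in (-1:ℝ)..0, (Real.exp t - 1) / t = ∫ u in (0:ℝ)..1, (1 - Real.exp (-u)) / u := by
    rw [show ∫ u in (0:ℝ)..1, (1 - Real.exp (-u)) / u
        = ∫ u in (0:ℝ)..1, (Real.exp (-u) - 1) / (-u) from ?_]
    · rw [intervalIntegral.integral_comp_neg (fun t => (Real.exp t - 1) / t)]
      norm_num
    · apply intervalIntegral.integral_congr
      intro u _
      show (1 - Real.exp (-u)) / u = (Real.exp (-u) - 1) / -u
      rw [div_neg, ← neg_div]
      ring_nf
  have hsplit : ∫ t in Set.Ioi (0:ℝ), Real.exp (-t) * Real.log t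
      = (∫ u in Ioc (0:ℝ) 1, Real.exp (-u) * Real.log u)
        + ∫ u in Ioi (1:ℝ), Real.exp (-u) * Real.log u := by
    rw [← MeasureTheory.setIntegral_union (Set.Ioc_disjoint_Ioi le_rfl) measurableSet_Ioi int1 int2]
    rw [Set.Ioc_union_Ioi_eq_Ioi zero_le_one]
  have hlemA := lemA
  rw [hsplit, step_e, step_f] at hlemA
  rw [hA, hC]
  linarith


lemma hasDerivAt_log_neg {y : ℝ} (hy : y < 0) :
    HasDerivAt (fun y : ℝ => Real.log (-y)) (1 / y) y := by
  have h := (Real.hasDerivAt_log (x := -y) (by linarith)).comp y (hasDerivAt_neg y)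
  refine h.congr_deriv ?_
  ring

lemma hasDerivAt_rhs {y : ℝ} (hy : y < 0) :
    HasDerivAt (fun y : ℝ => Real.eulerMascheroniConstant + Real.log (-y) + S y)
      (Real.exp y / y) y := by
  have h1 := (hasDerivAt_log_neg hy).const_add Real.eulerMascheroniConstant
  have h2 := hasDerivAt_S' (ne_of_lt hy)
  have h3 := h1.add h2
  refine h3.congr_deriv ?_
  ring

lemma one_div_intable {y : ℝ} (hy : y ≤ -1) :
    IntervalIntegrable (fun t : ℝ => 1 / t) volume y (-1) := by
  apply intervalIntegral.intervalIntegrable_one_div _ continuousOn_id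
  intro t ht
  have h1 : t ≤ -1 := by
    rcases ht with ⟨h2, h3⟩
    rw [sup_eq_right.mpr hy] at h3
    exact h3
  intro h; simp only [id_eq] at h; rw [h] at h1; linarith

lemma rhs_eventually : (fun y : ℝ => Real.eulerMascheroniConstant + Real.log (-y) + S y)
    =ᶠ[atBot] fun y => (Real.eulerMascheroniConstant - ∫ t in (-1:ℝ)..0, (Real.exp t - 1) / t)
      - ∫ t in y..(-1:ℝ), Real.exp t / t := by
  filter_upwards [eventually_le_atBot (-1:ℝ)] with y hy
  have hy0 : y < 0 := lt_of_le_of_lt hy (by norm_num)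
  have hlog : Real.log (-y) = -∫ t in y..(-1:ℝ), 1 / t := by
    rw [integral_one_div_of_neg hy0 (by norm_num)]
    rw [show (-1:ℝ) / y = (-y)⁻¹ by rw [neg_div, one_div, inv_neg]]
    rw [Real.log_inv, neg_neg]
  have hS : S y = -((∫ t in y..(-1:ℝ), (Real.exp t - 1) / t)
      + ∫ t in (-1:ℝ)..0, (Real.exp t - 1) / t) := by
    rw [S_eq hy0]
    rw [intervalIntegral.integral_add_adjacent_intervals (intOn_ratio hy0.le (by norm_num))
      (intOn_ratio (by norm_num) le_rfl)]
  have hcombine : (∫ t in y..(-1:ℝ), 1 / t) + ∫ t in y..(-1:ℝ), (Real.exp t - 1) / t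
      = ∫ t in y..(-1:ℝ), Real.exp t / t := by
    rw [← intervalIntegral.integral_add (one_div_intable hy) (intOn_ratio hy0.le (by norm_num))]
    apply intervalIntegral.integral_congr
    intro t ht
    have h1 : t ≤ -1 := by
      rcases ht with ⟨h2, h3⟩
      rw [sup_eq_right.mpr hy] at h3
      exact h3
    have ht0 : t ≠ 0 := by linarith
    field_simp
    ring
  rw [hlog, hS]
  linarith [hcombine]

theorem stmt_15 (x : ℝ) (hx : x < 0) :
    (∫ t in Set.Iic x, Real.exp t / t)
      = Real.eulerMascheroniConstant + Real.log (-x)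
        + ∑' n : ℕ, x ^ (n + 1) / ((n + 1) * Nat.factorial (n + 1)) := by
  have hm : Tendsto (fun y : ℝ => Real.eulerMascheroniConstant + Real.log (-y) + S y)
      atBot (𝓝 0) := by
    rw [Filter.tendsto_congr' rhs_eventually]
    have h1 : Tendsto (fun y : ℝ => ∫ t in y..(-1:ℝ), Real.exp t / t) atBot
        (𝓝 (∫ t in Iic (-1:ℝ), Real.exp t / t)) :=
      intervalIntegral_tendsto_integral_Iic (-1) (exp_div_integrableOn_Iic (by norm_num)) tendsto_id
    have h2 := (tendsto_const_nhds (x := (Real.eulerMascheroniConstant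
      - ∫ t in (-1:ℝ)..0, (Real.exp t - 1) / t)) (f := atBot (α := ℝ))).sub h1
    convert h2 using 2
    linarith [key]
  have h := integral_Iic_of_hasDerivAt_of_tendsto'
    (fun y hy => hasDerivAt_rhs (lt_of_le_of_lt hy hx))
    (exp_div_integrableOn_Iic hx) hm
  rw [h, sub_zero]
  rfl
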